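/- Let f(x) = Σ_{j=1}^t c_j x^{δ_j} be a t-sparse polynomial over a field K with all c_j ≠ 0 and the values ρ_j = ω^{δ_j} pairwise distinct for a nonzero ω ∈ K. Then for every r and every m ≥ t, the (m+1)×(m+1) Hankel matrix H with entries H[i,j] = f(ω^{r+i+j}) (0 ≤ i, j ≤ m) is singular, and moreover the infinite Hankel matrix built from (f(ω^{r+i}))_{i≥0} has rank exactly t. -/
import Mathlib


open Finset

/-- For a `t`-sparse polynomial `f = Σ c_j x^{δ_j}` with pairwise distinct term
values `ω^{δ_j}`, every `(m+1)×(m+1)` Hankel matrix of the evaluation sequence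
`(f(ω^{r+i}))_i` with `m ≥ t` is singular, the rank of every finite Hankel matrix
is at most `t`, and the `t × t` Hankel matrix has rank exactly `t`
(so the infinite Hankel matrix has rank exactly `t`). -/
theorem stmt5 (K : Type*) [Field K] (t : ℕ) (δ : Fin t → ℤ) (c : Fin t → K)
    (hc : ∀ j, c j ≠ 0) (ω : K) (hω : ω ≠ 0)
    (hdist : Function.Injective fun j => ω ^ (δ j))
    (a : ℤ → K) (ha : ∀ n : ℤ, a n = ∑ j, c j * (ω ^ (δ j)) ^ n) (r : ℤ) :
    (∀ m : ℕ, t ≤ m →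
        (Matrix.of fun i j : Fin (m + 1) => a (r + i + j)).det = 0) ∧
    (∀ m : ℕ, (Matrix.of fun i j : Fin (m + 1) => a (r + i + j)).rank ≤ t) ∧
    (Matrix.of fun i j : Fin t => a (r + i + j)).rank = t := by
  set ρ : Fin t → K := fun j => ω ^ (δ j) with hρdef
  have hρ : ∀ j, ρ j ≠ 0 := fun j => zpow_ne_zero _ hω
  -- factorization for arbitrary height n
  have key : ∀ n : ℕ, (Matrix.of fun i j : Fin n => a (r + i + j)) =
      (Matrix.of fun (i : Fin n) (k : Fin t) => c k * ρ k ^ (r + i)) *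
      (Matrix.of fun (k : Fin t) (j : Fin n) => ρ k ^ (j : ℤ)) := by
    intro n
    ext i j
    simp only [Matrix.mul_apply, Matrix.of_apply, ha]
    refine Finset.sum_congr rfl fun k _ => ?_
    rw [zpow_add₀ (hρ k), mul_assoc]
  have hrank : ∀ n : ℕ, (Matrix.of fun i j : Fin n => a (r + i + j)).rank ≤ t := by
    intro n
    rw [key n]
    calc _ ≤ (Matrix.of fun (k : Fin t) (j : Fin n) => ρ k ^ (j : ℤ)).rank :=
          Matrix.rank_mul_le_right _ _
      _ ≤ t := by
          simpa using Matrix.rank_le_card_height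
            (Matrix.of fun (k : Fin t) (j : Fin n) => ρ k ^ (j : ℤ))
  refine ⟨fun m hm => ?_, fun m => hrank (m+1), ?_⟩
  · by_contra h
    have : (Matrix.of fun i j : Fin (m + 1) => a (r + i + j)).rank = m + 1 := by
      simpa using Matrix.rank_of_isUnit _ ((Matrix.isUnit_iff_isUnit_det _).mpr (Ne.isUnit h))
    have h2 := hrank (m+1)
    rw [this] at h2
    omega
  · -- t × t case: det ≠ 0
    have hfac : (Matrix.of fun i j : Fin t => a (r + i + j)) =
        (Matrix.vandermonde ρ).transpose * Matrix.diagonal (fun k => c k * ρ k ^ r) *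
          Matrix.vandermonde ρ := by
      rw [key t]
      congr 1
      · ext i k
        simp only [Matrix.mul_apply, Matrix.transpose_apply, Matrix.vandermonde,
          Matrix.diagonal_apply, Matrix.of_apply]
        rw [Finset.sum_eq_single k]
        · simp [zpow_add₀ (hρ k), zpow_natCast]; ring
        · intro b _ hb; simp [hb]
        · simp
      · ext k j
        simp [Matrix.vandermonde, zpow_natCast]
    have hdet : (Matrix.of fun i j : Fin t => a (r + i + j)).det ≠ 0 := by
      rw [hfac]
      simp only [Matrix.det_mul, Matrix.det_transpose, Matrix.det_diagonal]
      refine mul_ne_zero (mul_ne_zero ?_ ?_) ?_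
      · exact Matrix.det_vandermonde_ne_zero_iff.mpr hdist
      · exact Finset.prod_ne_zero_iff.mpr fun k _ => mul_ne_zero (hc k) (zpow_ne_zero _ (hρ k))
      · exact Matrix.det_vandermonde_ne_zero_iff.mpr hdist
    simpa using Matrix.rank_of_isUnit _ ((Matrix.isUnit_iff_isUnit_det _).mpr hdet.isUnit)
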